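/- Suppose the data set is quadratically separable, i.e., there exists (z̄, c̄) with y_i(z̄^T r_i + c̄) ≥ 1 for all i = 1,...,m. Then for every λ > 0 there exists μ̄ > 0 such that for all μ > μ̄, every optimal solution (z*, c*, ξ*, ψ*) of the convex program min (1/2)z^T G z + λ||Vz||_1 + μ∑_i ξ_i + C_u ∑_j ψ_j subject to y_i(z^T r_i + c) ≥ 1 − ξ_i, y_j(z^T r_j + c) ≥ −ε − ψ_j, ξ ≥ 0, ψ ≥ 0, has ξ* = 0. -/

import Mathlib

open Matrix BigOperators

set_option maxHeartbeats 1000000 in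
/-- Vanishing margin: if the data is quadratically separable, then for every `λ > 0`
there is a threshold `μ̄ > 0` such that for all `μ > μ̄`, every optimal solution of the
L1-regularized Universum quadratic-surface SVM program has `ξ* = 0`. -/
theorem vanishing_margin (d m r k : ℕ)
    (G : Matrix (Fin d) (Fin d) ℝ) (hG : G.PosDef)
    (V : Matrix (Fin k) (Fin d) ℝ)
    (rv : Fin m → Fin d → ℝ) (ru : Fin (2 * r) → Fin d → ℝ)
    (y : Fin m → ℝ) (hy : ∀ i, y i = 1 ∨ y i = -1)
    (yu : Fin (2 * r) → ℝ) (hyu : ∀ j, yu j = 1 ∨ yu j = -1)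
    (lam Cu eps : ℝ) (hlam : 0 < lam) (hCu : 0 < Cu) (heps : 0 ≤ eps)
    (hsep : ∃ (zb : Fin d → ℝ) (cb : ℝ), ∀ i, y i * (zb ⬝ᵥ rv i + cb) ≥ 1) :
    ∃ mubar : ℝ, 0 < mubar ∧ ∀ mu : ℝ, mubar < mu →
      let obj : (Fin d → ℝ) × ℝ × (Fin m → ℝ) × (Fin (2 * r) → ℝ) → ℝ := fun p =>
        (1/2) * (p.1 ⬝ᵥ G.mulVec p.1) + lam * ∑ i, |V.mulVec p.1 i|
          + mu * ∑ i, p.2.2.1 i + Cu * ∑ j, p.2.2.2 j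
      let feas : (Fin d → ℝ) × ℝ × (Fin m → ℝ) × (Fin (2 * r) → ℝ) → Prop := fun p =>
        (∀ i, y i * (p.1 ⬝ᵥ rv i + p.2.1) ≥ 1 - p.2.2.1 i) ∧
        (∀ j, yu j * (p.1 ⬝ᵥ ru j + p.2.1) ≥ -eps - p.2.2.2 j) ∧
        (∀ i, 0 ≤ p.2.2.1 i) ∧ (∀ j, 0 ≤ p.2.2.2 j)
      ∀ p, feas p → (∀ q, feas q → obj p ≤ obj q) → p.2.2.1 = 0 := by
  obtain ⟨zb, cb, hzb⟩ := hsep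
  -- the scaled separating point
  set w : Fin d → ℝ := (2 : ℝ) • zb with hw
  set ch : ℝ := 2 * cb with hch
  set psih : Fin (2 * r) → ℝ := fun j => |w ⬝ᵥ ru j + ch| with hpsih
  set K2 : ℝ := (1/2) * (w ⬝ᵥ G.mulVec w) + lam * ∑ i, |V.mulVec w i|
      + Cu * ∑ j, psih j with hK2
  have hPSD : ∀ v : Fin d → ℝ, 0 ≤ v ⬝ᵥ G.mulVec v := fun v => by simpa using hG.posSemidef.dotProduct_mulVec_nonneg v
  have hK2nn : 0 ≤ K2 := by
    have h1 : 0 ≤ ∑ i, |V.mulVec w i| := Finset.sum_nonneg fun i _ => abs_nonneg _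
    have h2 : 0 ≤ ∑ j, psih j := Finset.sum_nonneg fun j _ => abs_nonneg _
    have := hPSD w
    positivity
  -- symmetry of the quadratic form
  have hGsym : ∀ i j, G i j = G j i := fun i j => by
    have := congrFun (congrFun hG.1 j) i
    simpa [Matrix.conjTranspose_apply] using this
  have hsym : ∀ a b : Fin d → ℝ, a ⬝ᵥ G.mulVec b = b ⬝ᵥ G.mulVec a := by
    intro a b
    simp only [dotProduct, Matrix.mulVec, Finset.mul_sum]
    rw [Finset.sum_comm]
    exact Finset.sum_congr rfl fun i _ => Finset.sum_congr rfl fun j _ => by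
      rw [hGsym j i]; ring
  have hexpand : ∀ (a b : Fin d → ℝ) (s u : ℝ),
      (s • a + u • b) ⬝ᵥ G.mulVec (s • a + u • b)
        = s^2 * (a ⬝ᵥ G.mulVec a) + 2*s*u*(a ⬝ᵥ G.mulVec b)
          + u^2 * (b ⬝ᵥ G.mulVec b) := by
    intro a b s u
    simp only [Matrix.mulVec_add, Matrix.mulVec_smul, dotProduct_add, add_dotProduct,
      dotProduct_smul, smul_dotProduct, smul_eq_mul]
    linear_combination (-(s*u)) * (hsym a b)
  refine ⟨K2 + 1, by linarith, ?_⟩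
  intro mu hmu obj feas p hfeas hopt
  have hmu0 : 0 < mu := by linarith
  obtain ⟨hc1, hc2, hc3, hc4⟩ :
      (∀ i, y i * (p.1 ⬝ᵥ rv i + p.2.1) ≥ 1 - p.2.2.1 i) ∧
      (∀ j, yu j * (p.1 ⬝ᵥ ru j + p.2.1) ≥ -eps - p.2.2.2 j) ∧
      (∀ i, 0 ≤ p.2.2.1 i) ∧ (∀ j, 0 ≤ p.2.2.2 j) := hfeas
  set S : ℝ := ∑ i, p.2.2.1 i with hSdef
  have hS0 : 0 ≤ S := Finset.sum_nonneg fun i _ => hc3 i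
  have hSzero : S = 0 := by
    by_contra hne
    have hS : 0 < S := lt_of_le_of_ne hS0 (Ne.symm hne)
    set t : ℝ := S / (S + 1) with htdef
    have hS1 : 0 < S + 1 := by linarith
    have ht : t * (S + 1) = S := by
      rw [htdef]; exact div_mul_cancel₀ S (ne_of_gt hS1)
    have ht0 : 0 < t := div_pos hS hS1
    have ht1 : t < 1 := by
      rw [htdef, div_lt_one hS1]; linarith
    have hxi_le : ∀ i, p.2.2.1 i ≤ S := fun i =>
      Finset.single_le_sum (fun i _ => hc3 i) (Finset.mem_univ i)
    -- the competitor point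
    set q : (Fin d → ℝ) × ℝ × (Fin m → ℝ) × (Fin (2 * r) → ℝ) :=
      ((1-t) • p.1 + t • w, (1-t) * p.2.1 + t * ch, 0,
        fun j => (1-t) * p.2.2.2 j + t * psih j) with hq
    -- linear decomposition of the constraint values
    have hdecv : ∀ i, q.1 ⬝ᵥ rv i + q.2.1
        = (1-t) * (p.1 ⬝ᵥ rv i + p.2.1) + t * (w ⬝ᵥ rv i + ch) := by
      intro i
      simp only [hq, add_dotProduct, smul_dotProduct, smul_eq_mul]
      ring
    have hdecu : ∀ j, q.1 ⬝ᵥ ru j + q.2.1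
        = (1-t) * (p.1 ⬝ᵥ ru j + p.2.1) + t * (w ⬝ᵥ ru j + ch) := by
      intro j
      simp only [hq, add_dotProduct, smul_dotProduct, smul_eq_mul]
      ring
    have hwrv : ∀ i, y i * (w ⬝ᵥ rv i + ch) ≥ 2 := by
      intro i
      have := hzb i
      have hdec : y i * (w ⬝ᵥ rv i + ch) = 2 * (y i * (zb ⬝ᵥ rv i + cb)) := by
        simp only [hw, hch, smul_dotProduct, smul_eq_mul]; ring
      rw [hdec]; linarith
    have hyuabs : ∀ j, |yu j| = 1 := fun j => by rcases hyu j with h | h <;> simp [h]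
    have hwru : ∀ j, yu j * (w ⬝ᵥ ru j + ch) ≥ -psih j := by
      intro j
      have h1 : |yu j * (w ⬝ᵥ ru j + ch)| = psih j := by
        rw [abs_mul, hyuabs j, one_mul]
      have := neg_abs_le (yu j * (w ⬝ᵥ ru j + ch))
      linarith [this, h1.ge, h1.le]
    have hqfeas : feas q := by
      refine ⟨?_, ?_, ?_, ?_⟩
      · intro i
        have hA := hc1 i
        have hB := hwrv i
        have hdec : y i * (q.1 ⬝ᵥ rv i + q.2.1)
            = (1-t) * (y i * (p.1 ⬝ᵥ rv i + p.2.1)) + t * (y i * (w ⬝ᵥ rv i + ch)) := by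
          rw [hdecv i]; ring
        have hxi := hxi_le i
        have hxinn := hc3 i
        have : (1-t) * (y i * (p.1 ⬝ᵥ rv i + p.2.1)) ≥ (1-t) * (1 - p.2.2.1 i) :=
          mul_le_mul_of_nonneg_left hA (by linarith)
        have h2 : t * (y i * (w ⬝ᵥ rv i + ch)) ≥ t * 2 :=
          mul_le_mul_of_nonneg_left hB (le_of_lt ht0)
        show y i * (q.1 ⬝ᵥ rv i + q.2.1) ≥ 1 - q.2.2.1 i
        have hq3 : q.2.2.1 i = 0 := rfl
        rw [hdec, hq3]
        -- need (1-t)(1 - ξ_i) + 2t ≥ 1, i.e. t(1+ξ_i) ≥ ξ_i, true since t(S+1) = S ≥ ξ_i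
        nlinarith [ht, hxi, hxinn, ht0, ht1, hS1]
      · intro j
        have hA := hc2 j
        have hB := hwru j
        have hdec : yu j * (q.1 ⬝ᵥ ru j + q.2.1)
            = (1-t) * (yu j * (p.1 ⬝ᵥ ru j + p.2.1)) + t * (yu j * (w ⬝ᵥ ru j + ch)) := by
          rw [hdecu j]; ring
        show yu j * (q.1 ⬝ᵥ ru j + q.2.1) ≥ -eps - q.2.2.2 j
        have hq4 : q.2.2.2 j = (1-t) * p.2.2.2 j + t * psih j := rfl
        rw [hdec, hq4]
        have h1 : (1-t) * (yu j * (p.1 ⬝ᵥ ru j + p.2.1)) ≥ (1-t) * (-eps - p.2.2.2 j) :=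
          mul_le_mul_of_nonneg_left hA (by linarith)
        have h2 : t * (yu j * (w ⬝ᵥ ru j + ch)) ≥ t * (-psih j) :=
          mul_le_mul_of_nonneg_left hB (le_of_lt ht0)
        nlinarith [heps, ht0, ht1]
      · intro i; exact le_refl 0
      · intro j
        have := hc4 j
        have h2 : (0:ℝ) ≤ psih j := abs_nonneg _
        show (0:ℝ) ≤ (1-t) * p.2.2.2 j + t * psih j
        have ha := mul_nonneg (by linarith : (0:ℝ) ≤ 1-t) this
        have hb := mul_nonneg (le_of_lt ht0) h2
        linarith
    have hle : obj p ≤ obj q := hopt q hqfeas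
    -- convexity bound on obj q
    have hquad : q.1 ⬝ᵥ G.mulVec q.1
        ≤ (1-t) * (p.1 ⬝ᵥ G.mulVec p.1) + t * (w ⬝ᵥ G.mulVec w) := by
      have h1 := hexpand p.1 w (1-t) t
      have h2 := hPSD (p.1 - w)
      have h3 : (p.1 - w) ⬝ᵥ G.mulVec (p.1 - w)
          = p.1 ⬝ᵥ G.mulVec p.1 - 2 * (p.1 ⬝ᵥ G.mulVec w) + w ⬝ᵥ G.mulVec w := by
        have : p.1 - w = (1:ℝ) • p.1 + (-1:ℝ) • w := by
          funext i; simp [sub_eq_add_neg]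
        rw [this, hexpand p.1 w 1 (-1)]; ring
      have hq1 : q.1 = (1-t) • p.1 + t • w := rfl
      have h4 : 0 ≤ t * (1-t) * ((p.1 - w) ⬝ᵥ G.mulVec (p.1 - w)) :=
        mul_nonneg (mul_nonneg (le_of_lt ht0) (by linarith)) h2
      rw [h3] at h4
      rw [hq1, h1]
      nlinarith [h4]
    have hl1 : ∑ i, |V.mulVec q.1 i|
        ≤ (1-t) * ∑ i, |V.mulVec p.1 i| + t * ∑ i, |V.mulVec w i| := by
      rw [Finset.mul_sum, Finset.mul_sum, ← Finset.sum_add_distrib]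
      refine Finset.sum_le_sum fun i _ => ?_
      have hq1 : q.1 = (1-t) • p.1 + t • w := rfl
      have hdec : V.mulVec q.1 i = (1-t) * V.mulVec p.1 i + t * V.mulVec w i := by
        rw [hq1]
        simp [Matrix.mulVec_add, Matrix.mulVec_smul]
      rw [hdec]
      calc |(1-t) * V.mulVec p.1 i + t * V.mulVec w i|
          ≤ |(1-t) * V.mulVec p.1 i| + |t * V.mulVec w i| := abs_add_le _ _
        _ = (1-t) * |V.mulVec p.1 i| + t * |V.mulVec w i| := by
            rw [abs_mul, abs_mul, abs_of_nonneg (by linarith : (0:ℝ) ≤ 1-t),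
              abs_of_nonneg (le_of_lt ht0)]
    have hpsisum : ∑ j, q.2.2.2 j = (1-t) * ∑ j, p.2.2.2 j + t * ∑ j, psih j := by
      rw [Finset.mul_sum, Finset.mul_sum, ← Finset.sum_add_distrib]
    have hxisum : ∑ i, q.2.2.1 i = 0 := by
      simp [hq]
    -- combine: obj q ≤ (1-t) * (obj p - mu * S) + t * K2
    have hobjq : obj q ≤ (1-t) * (obj p - mu * S) + t * K2 := by
      have e1 : obj q = (1/2) * (q.1 ⬝ᵥ G.mulVec q.1) + lam * ∑ i, |V.mulVec q.1 i|
          + mu * ∑ i, q.2.2.1 i + Cu * ∑ j, q.2.2.2 j := rfl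
      have e2 : obj p = (1/2) * (p.1 ⬝ᵥ G.mulVec p.1) + lam * ∑ i, |V.mulVec p.1 i|
          + mu * S + Cu * ∑ j, p.2.2.2 j := rfl
      calc obj q = (1/2) * (q.1 ⬝ᵥ G.mulVec q.1) + lam * ∑ i, |V.mulVec q.1 i|
            + Cu * ∑ j, q.2.2.2 j := by rw [e1, hxisum]; ring
        _ ≤ (1/2) * ((1-t) * (p.1 ⬝ᵥ G.mulVec p.1) + t * (w ⬝ᵥ G.mulVec w))
            + lam * ((1-t) * ∑ i, |V.mulVec p.1 i| + t * ∑ i, |V.mulVec w i|)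
            + Cu * ((1-t) * ∑ j, p.2.2.2 j + t * ∑ j, psih j) := by
              refine add_le_add (add_le_add ?_ ?_) ?_
              · linarith [hquad]
              · exact mul_le_mul_of_nonneg_left hl1 (le_of_lt hlam)
              · exact le_of_eq (by rw [hpsisum])
        _ = (1-t) * ((1/2) * (p.1 ⬝ᵥ G.mulVec p.1) + lam * ∑ i, |V.mulVec p.1 i|
            + Cu * ∑ j, p.2.2.2 j) + t * K2 := by rw [hK2]; ring
        _ = (1-t) * (obj p - mu * S) + t * K2 := by rw [e2]; ring
    -- obj p ≥ mu * S
    have hobjp : mu * S ≤ obj p := by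
      have e2 : obj p = (1/2) * (p.1 ⬝ᵥ G.mulVec p.1) + lam * ∑ i, |V.mulVec p.1 i|
          + mu * S + Cu * ∑ j, p.2.2.2 j := rfl
      have h1 := hPSD p.1
      have h2 : 0 ≤ ∑ i, |V.mulVec p.1 i| := Finset.sum_nonneg fun i _ => abs_nonneg _
      have h3 : 0 ≤ ∑ j, p.2.2.2 j := Finset.sum_nonneg fun j _ => hc4 j
      rw [e2]
      nlinarith [hlam, hCu]
    -- derive contradiction : mu * S ≤ t * K2 and t*(S+1) = S, 0 < S, K2 + 1 < mu
    have hkey : mu * S ≤ t * K2 := by nlinarith [hle, hobjq, hobjp, ht0, ht1]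
    -- t = S/(S+1) so mu * S * (S+1) ≤ S * K2, hence mu * (S+1) ≤ K2, contradiction
    have hms : mu * S * (S + 1) ≤ S * K2 := by
      have := mul_le_mul_of_nonneg_right hkey (le_of_lt hS1)
      nlinarith [ht]
    have hx : S * K2 < S * mu := (mul_lt_mul_iff_right₀ hS).2 (by linarith)
    nlinarith [mul_pos (mul_pos hmu0 hS) hS]
  -- S = 0 and each ξ_i ≥ 0 forces ξ = 0
  funext i
  have h1 : p.2.2.1 i ≤ S := Finset.single_le_sum (fun i _ => hc3 i) (Finset.mem_univ i)
  have h2 := hc3 i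
  have : p.2.2.1 i = 0 := le_antisymm (hSzero ▸ h1) h2
  simpa using this
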